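/- Let X_n be discretely generated regular spaces for n ≥ 1 and suppose that every finite product ∏_{i=1}^m X_i is discretely generated. Then the countable product ∏_{i=1}^∞ X_i is discretely generated. -/

import Mathlib

/-- A space is discretely generated if for every set `A` and every point `x` in its
closure there is a discrete subset `E ⊆ A` with `x ∈ closure E`. -/
def DiscretelyGenerated (X : Type*) [TopologicalSpace X] : Prop :=
  ∀ (A : Set X) (x : X), x ∈ closure A →
    ∃ E : Set X, E ⊆ A ∧ DiscreteTopology ↥E ∧ x ∈ closure E

/-- Sets all of whose points have isolating open sets carry the discrete topology. -/
lemma discrete_of_isolators {Z : Type*} [TopologicalSpace Z] {F : Set Z}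
    (h : ∀ a ∈ F, ∃ W, IsOpen W ∧ a ∈ W ∧ W ∩ F ⊆ {a}) : DiscreteTopology ↥F := by
  rw [discreteTopology_iff_isOpen_singleton]
  rintro ⟨a, ha⟩
  obtain ⟨W, hWo, haW, hWF⟩ := h a ha
  rw [isOpen_induced_iff]
  refine ⟨W, hWo, ?_⟩
  ext ⟨b, hb⟩
  simp only [Set.mem_preimage, Set.mem_singleton_iff]
  constructor
  · intro hbW
    exact Subtype.ext (hWF ⟨hbW, hb⟩)
  · intro h2
    obtain rfl : b = a := congrArg Subtype.val h2
    exact haW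

/-- Every point of a discrete subset has an isolating open set. -/
lemma isolators_of_discrete {Z : Type*} [TopologicalSpace Z] {F : Set Z}
    (hd : DiscreteTopology ↥F) : ∀ a ∈ F, ∃ W, IsOpen W ∧ a ∈ W ∧ W ∩ F ⊆ {a} := by
  intro a ha
  haveI := hd
  have h1 : IsOpen ({⟨a, ha⟩} : Set ↥F) := isOpen_discrete _
  rw [isOpen_induced_iff] at h1
  obtain ⟨W, hWo, hW⟩ := h1
  have haW : a ∈ W := by
    have : (⟨a, ha⟩ : ↥F) ∈ Subtype.val ⁻¹' W := by rw [hW]; rfl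
    exact this
  refine ⟨W, hWo, haW, ?_⟩
  rintro b ⟨hbW, hbF⟩
  have hb : (⟨b, hbF⟩ : ↥F) ∈ Subtype.val ⁻¹' W := hbW
  rw [hW] at hb
  exact congrArg Subtype.val hb

/-- Corollary 5.2 (Alas–Wilson): if all finite products of the regular discretely
generated spaces `X i` are discretely generated, then so is the countable product. -/
theorem stmt5 (X : ℕ → Type*) [∀ n, TopologicalSpace (X n)]
    [∀ n, RegularSpace (X n)]
    (hDG : ∀ n, DiscretelyGenerated (X n))
    (hfin : ∀ m : ℕ, DiscretelyGenerated (∀ i : Fin m, X i)) :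
    DiscretelyGenerated (∀ n, X n) := by
  intro A x hxA
  by_contra hcon
  -- Key step: inside any open neighbourhood `Q` of `x` we can find a set `F ⊆ A ∩ Q`
  -- which lifts a discrete set of the `n`-th finite product (so `F` hits every basic
  -- neighbourhood of `x` of depth `n` and has isolating opens), contained in an open
  -- set `G` whose closure misses `x`.
  have step : ∀ (n : ℕ) (Q : Set (∀ k, X k)), IsOpen Q → x ∈ Q →
      ∃ F G : Set (∀ k, X k), F ⊆ A ∧ F ⊆ Q ∧ F ⊆ G ∧ IsOpen G ∧ x ∉ closure G ∧
        (∀ a ∈ F, ∃ W, IsOpen W ∧ a ∈ W ∧ W ∩ F ⊆ {a}) ∧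
        (∀ U : (k : ℕ) → Set (X k), (∀ k, IsOpen (U k)) → (∀ k, x k ∈ U k) →
          ∃ a ∈ F, ∀ k, k < n → a k ∈ U k) := by
    intro n Q hQo hxQ
    have hxAQ : x ∈ closure (A ∩ Q) := by
      rw [mem_closure_iff] at hxA ⊢
      intro O hOo hxO
      obtain ⟨a, haO, haA⟩ := hxA (O ∩ Q) (hOo.inter hQo) ⟨hxO, hxQ⟩
      exact ⟨a, haO.1, haA, haO.2⟩
    set π : (∀ k, X k) → (∀ i : Fin n, X i) := fun a i => a i with hπdef
    have hπc : Continuous π := continuous_pi fun i => continuous_apply _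
    have h1 : π x ∈ closure (π '' (A ∩ Q)) :=
      (image_closure_subset_closure_image hπc) ⟨x, hxAQ, rfl⟩
    obtain ⟨E', hE'sub, hE'disc, hE'cl⟩ := hfin n (π '' (A ∩ Q)) (π x) h1
    choose f hf1 hf2 using fun e : ↥E' => hE'sub e.2
    set F : Set (∀ k, X k) := Set.range f with hFdef
    have hFA : F ⊆ A := by rintro _ ⟨e, rfl⟩; exact (hf1 e).1
    have hFQ : F ⊆ Q := by rintro _ ⟨e, rfl⟩; exact (hf1 e).2
    have hiso : ∀ a ∈ F, ∃ W, IsOpen W ∧ a ∈ W ∧ W ∩ F ⊆ {a} := by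
      rintro _ ⟨e, rfl⟩
      obtain ⟨W', hW'o, heW', hW'E⟩ := isolators_of_discrete hE'disc (↑e) e.2
      refine ⟨π ⁻¹' W', hW'o.preimage hπc, ?_, ?_⟩
      · show π (f e) ∈ W'
        rw [hf2 e]; exact heW'
      · rintro b ⟨hbW, hbF⟩
        obtain ⟨e', rfl⟩ := hbF
        have h3 : π (f e') ∈ W' := hbW
        rw [hf2 e'] at h3
        have he'e : e' = e := Subtype.ext (hW'E ⟨h3, e'.2⟩)
        rw [he'e]; rfl
    have hFdisc : DiscreteTopology ↥F := discrete_of_isolators hiso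
    have hxF : x ∉ closure F := fun h' => hcon ⟨F, hFA, hFdisc, h'⟩
    have hmem : (closure F)ᶜ ∈ nhds x := isClosed_closure.isOpen_compl.mem_nhds hxF
    obtain ⟨K, ⟨hKnhds, hKclosed⟩, hKsub⟩ := (closed_nhds_basis x).mem_iff.mp hmem
    refine ⟨F, Kᶜ, hFA, hFQ, ?_, hKclosed.isOpen_compl, ?_, hiso, ?_⟩
    · -- F ⊆ Kᶜ
      intro a haF haK
      exact (hKsub haK) (subset_closure haF)
    · -- x ∉ closure Kᶜ
      intro hxcl
      rw [mem_closure_iff] at hxcl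
      obtain ⟨b, hbint, hbK⟩ :=
        hxcl (interior K) isOpen_interior (mem_interior_iff_mem_nhds.mpr hKnhds)
      exact hbK (interior_subset hbint)
    · -- hitting property
      intro U hUo hxU
      have hBeq : {y : ∀ i : Fin n, X i | ∀ i : Fin n, y i ∈ U i}
          = Set.pi Set.univ (fun i : Fin n => U i) := by
        ext y; simp [Set.mem_pi]
      have hBo : IsOpen {y : ∀ i : Fin n, X i | ∀ i : Fin n, y i ∈ U i} := by
        rw [hBeq]; exact isOpen_set_pi Set.finite_univ fun i _ => hUo i
      have hxB : π x ∈ {y : ∀ i : Fin n, X i | ∀ i : Fin n, y i ∈ U i} :=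
        fun i => hxU i
      rw [mem_closure_iff] at hE'cl
      obtain ⟨e, heB, heE'⟩ := hE'cl _ hBo hxB
      refine ⟨f ⟨e, heE'⟩, ⟨⟨e, heE'⟩, rfl⟩, ?_⟩
      intro k hk
      have h4 : π (f ⟨e, heE'⟩) = e := hf2 ⟨e, heE'⟩
      have h5 : (f ⟨e, heE'⟩) k = e ⟨k, hk⟩ := congrFun h4 ⟨k, hk⟩
      rw [h5]
      exact heB ⟨k, hk⟩
  -- Make the step total so that it can be iterated by plain recursion with choice.
  have step' : ∀ (n : ℕ) (Q : Set (∀ k, X k)),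
      ∃ FG : Set (∀ k, X k) × Set (∀ k, X k), IsOpen Q → x ∈ Q →
        (FG.1 ⊆ A ∧ FG.1 ⊆ Q ∧ FG.1 ⊆ FG.2 ∧ IsOpen FG.2 ∧ x ∉ closure FG.2 ∧
          (∀ a ∈ FG.1, ∃ W, IsOpen W ∧ a ∈ W ∧ W ∩ FG.1 ⊆ {a}) ∧
          (∀ U : (k : ℕ) → Set (X k), (∀ k, IsOpen (U k)) → (∀ k, x k ∈ U k) →
            ∃ a ∈ FG.1, ∀ k, k < n → a k ∈ U k)) := by
    intro n Q
    by_cases h : IsOpen Q ∧ x ∈ Q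
    · obtain ⟨F, G, hp⟩ := step n Q h.1 h.2
      exact ⟨(F, G), fun _ _ => hp⟩
    · exact ⟨(∅, ∅), fun h1 h2 => absurd ⟨h1, h2⟩ h⟩
  choose FG hFG using step'
  -- The decreasing sequence of open neighbourhoods of `x`.
  let Qs : ℕ → Set (∀ k, X k) :=
    fun n => Nat.rec Set.univ (fun m ih => ih ∩ (closure (FG m ih).2)ᶜ) n
  have hQsucc : ∀ n, Qs (n + 1) = Qs n ∩ (closure (FG n (Qs n)).2)ᶜ := fun n => rfl
  have hQs : ∀ n, IsOpen (Qs n) ∧ x ∈ Qs n := by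
    intro n
    induction n with
    | zero => exact ⟨isOpen_univ, trivial⟩
    | succ m ih =>
      have hp := hFG m (Qs m) ih.1 ih.2
      rw [hQsucc]
      exact ⟨ih.1.inter isClosed_closure.isOpen_compl, ih.2, hp.2.2.2.2.1⟩
  set Fs : ℕ → Set (∀ k, X k) := fun n => (FG n (Qs n)).1 with hFsdef
  set Gs : ℕ → Set (∀ k, X k) := fun n => (FG n (Qs n)).2 with hGsdef
  have hp : ∀ n, Fs n ⊆ A ∧ Fs n ⊆ Qs n ∧ Fs n ⊆ Gs n ∧ IsOpen (Gs n) ∧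
      x ∉ closure (Gs n) ∧ (∀ a ∈ Fs n, ∃ W, IsOpen W ∧ a ∈ W ∧ W ∩ Fs n ⊆ {a}) ∧
      (∀ U : (k : ℕ) → Set (X k), (∀ k, IsOpen (U k)) → (∀ k, x k ∈ U k) →
        ∃ a ∈ Fs n, ∀ k, k < n → a k ∈ U k) :=
    fun n => hFG n (Qs n) (hQs n).1 (hQs n).2
  have hQstep : ∀ n, Qs (n + 1) ⊆ (closure (Gs n))ᶜ := by
    intro n
    rw [hQsucc]
    exact Set.inter_subset_right
  have hQmono : ∀ (j n : ℕ), j ≤ n → Qs n ⊆ Qs j := by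
    intro j n h
    induction n with
    | zero =>
      obtain rfl := Nat.le_zero.mp h
      exact subset_rfl
    | succ m ih =>
      rcases Nat.lt_or_ge j (m + 1) with h' | h'
      · have h1 : Qs (m + 1) ⊆ Qs m := by
          rw [hQsucc]; exact Set.inter_subset_left
        exact h1.trans (ih (Nat.lt_succ_iff.mp h'))
      · obtain rfl := le_antisymm h h'
        exact subset_rfl
  set E : Set (∀ k, X k) := ⋃ n, Fs n with hEdef
  have hEA : E ⊆ A := Set.iUnion_subset fun n => (hp n).1
  have hEdisc : DiscreteTopology ↥E := by
    apply discrete_of_isolators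
    intro a haE
    obtain ⟨n, haFn⟩ := Set.mem_iUnion.mp haE
    obtain ⟨W, hWo, haW, hWF⟩ := (hp n).2.2.2.2.2.1 a haFn
    refine ⟨W ∩ Gs n ∩ Qs n, (hWo.inter (hp n).2.2.2.1).inter (hQs n).1,
      ⟨⟨haW, (hp n).2.2.1 haFn⟩, (hp n).2.1 haFn⟩, ?_⟩
    rintro b ⟨⟨⟨hbW, hbG⟩, hbQ⟩, hbE⟩
    obtain ⟨j, hbFj⟩ := Set.mem_iUnion.mp hbE
    rcases lt_trichotomy j n with hj | hj | hj
    · -- j < n : b ∈ Qs n ⊆ Qs (j+1) ⊆ (closure (Gs j))ᶜ, but b ∈ Fs j ⊆ Gs j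
      exact absurd (subset_closure ((hp j).2.2.1 hbFj))
        (hQstep j (hQmono (j+1) n hj hbQ))
    · subst hj
      exact hWF ⟨hbW, hbFj⟩
    · -- n < j : b ∈ Fs j ⊆ Qs j ⊆ Qs (n+1) ⊆ (closure (Gs n))ᶜ, but b ∈ Gs n
      exact absurd (subset_closure hbG)
        (hQstep n (hQmono (n+1) j hj ((hp j).2.1 hbFj)))
  have hxE : x ∈ closure E := by
    rw [mem_closure_iff]
    intro O hOo hxO
    obtain ⟨I, u, hIu, hsub⟩ := isOpen_pi_iff.mp hOo x hxO
    classical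
    set U : (k : ℕ) → Set (X k) := fun k => if k ∈ I then u k else Set.univ with hUdef
    have hUo : ∀ k, IsOpen (U k) := by
      intro k
      by_cases hk : k ∈ I
      · simp only [hUdef, if_pos hk]; exact (hIu k hk).1
      · simp only [hUdef, if_neg hk]; exact isOpen_univ
    have hxU : ∀ k, x k ∈ U k := by
      intro k
      by_cases hk : k ∈ I
      · simp only [hUdef, if_pos hk]; exact (hIu k hk).2
      · simp only [hUdef, if_neg hk]; trivial
    set n : ℕ := I.sup id + 1 with hndef
    obtain ⟨a, haF, ha⟩ := (hp n).2.2.2.2.2.2 U hUo hxU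
    have haO : a ∈ O := by
      apply hsub
      intro i hi
      have hiF : i ∈ I := Finset.mem_coe.mp hi
      have hin : i < n := Nat.lt_succ_of_le (Finset.le_sup (f := id) hiF)
      have h6 := ha i hin
      simp only [hUdef, hiF, if_true] at h6
      exact h6
    exact ⟨a, haO, Set.mem_iUnion.mpr ⟨n, haF⟩⟩
  exact hcon ⟨E, hEA, hEdisc, hxE⟩
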